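/- Let s > 0, let f : ℝ → ℝ be defined by f(x) = Σ_{j=3}^∞ 2^{−js} cos((11/8)·2^j·x), and for n ≥ 3 set t_n = 8π/(11·2^n). Then the Fourier coefficient of the 2π-periodic function x ↦ f(x − t_n) − f(x) at the frequency N_n = 11·2^{n−3}, with normalization ĝ(n) = (1/(2π)) ∫₀^{2π} g(x) e^{−inx} dx, equals −2^{−ns}. -/

import Mathlib

open Real Complex intervalIntegral

lemma int_exp (k : ℤ) : (∫ x in (0:ℝ)..(2*π), Complex.exp (k * Complex.I * x)) =
    if k = 0 then (2*π : ℂ) else 0 := by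
  rcases eq_or_ne k 0 with hk | hk
  · simp [hk]
  · rw [if_neg hk]
    have hc : (k : ℂ) * Complex.I ≠ 0 :=
      mul_ne_zero (by exact_mod_cast hk) Complex.I_ne_zero
    have := integral_exp_mul_complex (a := (0:ℝ)) (b := 2*π) hc
    rw [this]
    have h1 : Complex.exp ((k : ℂ) * Complex.I * (2*π : ℝ)) = 1 := by
      rw [show ((k:ℂ) * Complex.I * ((2*π:ℝ):ℂ)) = (k : ℂ) * (2 * π * Complex.I) by
        push_cast; ring]
      exact Complex.exp_int_mul_two_pi_mul_I k
    rw [show ((0:ℝ):ℂ) = 0 by norm_num, mul_zero, Complex.exp_zero, h1,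
      sub_self, zero_div]

lemma cos_int (m N : ℕ) (hN : 0 < N) (φ : ℝ) :
    (∫ x in (0:ℝ)..(2*π),
        ((Real.cos (m * x + φ) : ℝ) : ℂ) * Complex.exp (-Complex.I * N * x))
      = if m = N then (π : ℂ) * Complex.exp (φ * Complex.I) else 0 := by
  have hpt : ∀ x : ℝ,
      ((Real.cos (m * x + φ) : ℝ) : ℂ) * Complex.exp (-Complex.I * N * x)
        = (Complex.exp (φ * Complex.I) / 2) *
            Complex.exp ((((m : ℤ) - N) : ℤ) * Complex.I * x)
          + (Complex.exp (-(φ * Complex.I)) / 2) *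
            Complex.exp (((-((m : ℤ) + N)) : ℤ) * Complex.I * x) := by
    intro x
    rw [Complex.ofReal_cos, Complex.cos]
    rw [div_mul_eq_mul_div, add_mul, ← Complex.exp_add, ← Complex.exp_add,
      div_mul_eq_mul_div, div_mul_eq_mul_div, ← Complex.exp_add, ← Complex.exp_add]
    have e1 : (((m : ℝ) * x + φ : ℝ) : ℂ) * Complex.I + -Complex.I * N * x
        = φ * Complex.I + (((m : ℤ) - N) : ℤ) * Complex.I * x := by
      push_cast; ring
    have e2 : -(((m : ℝ) * x + φ : ℝ) : ℂ) * Complex.I + -Complex.I * N * x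
        = -(φ * Complex.I) + ((-((m : ℤ) + N)) : ℤ) * Complex.I * x := by
      push_cast; ring
    rw [e1, e2]; ring
  have hint : ∀ k : ℤ, IntervalIntegrable
      (fun x : ℝ => Complex.exp ((k : ℂ) * Complex.I * x)) MeasureTheory.volume 0 (2*π) :=
    fun k => (Continuous.intervalIntegrable (by fun_prop) _ _)
  rw [intervalIntegral.integral_congr (fun x _ => hpt x)]
  rw [intervalIntegral.integral_add ((hint _).const_mul _) ((hint _).const_mul _),
    intervalIntegral.integral_const_mul, intervalIntegral.integral_const_mul,
    int_exp, int_exp]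
  have h2 : (-((m : ℤ) + N)) ≠ 0 := by omega
  rw [if_neg h2, mul_zero, add_zero]
  rcases eq_or_ne m N with h | h
  · rw [if_pos h, if_pos (by omega)]
    ring_nf
  · rw [if_neg h, if_neg (by omega), mul_zero]

theorem stmt_7 (s : ℝ) (hs : 0 < s) (f : ℝ → ℝ)
    (hf : ∀ x : ℝ, f x = ∑' j : ℕ,
      (2 : ℝ) ^ (-(((j : ℝ) + 3)) * s) * Real.cos ((11 / 8) * 2 ^ (j + 3) * x))
    (n : ℕ) (hn : 3 ≤ n) (t : ℝ) (ht : t = 8 * π / (11 * 2 ^ n)) :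
    (1 / (2 * (π : ℂ))) * ∫ x in (0:ℝ)..(2 * π),
        ((f (x - t) - f x : ℝ) : ℂ)
          * Complex.exp (-Complex.I * ((11 * 2 ^ (n - 3) : ℕ) : ℂ) * (x : ℂ))
      = -((2 : ℝ) ^ (-(n : ℝ) * s) : ℝ) := by
  have ha0 : ∀ j : ℕ, 0 < (2 : ℝ) ^ (-(((j : ℝ) + 3)) * s) :=
    fun j => Real.rpow_pos_of_pos two_pos _
  have hr1 : (2:ℝ) ^ (-s) < 1 :=
    Real.rpow_lt_one_of_one_lt_of_neg one_lt_two (neg_lt_zero.mpr hs)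
  have hr0 : 0 ≤ (2:ℝ) ^ (-s) := (Real.rpow_pos_of_pos two_pos _).le
  have hsa : Summable (fun j : ℕ => (2 : ℝ) ^ (-(((j : ℝ) + 3)) * s)) := by
    have heq : ∀ j : ℕ, (2 : ℝ) ^ (-(((j : ℝ) + 3)) * s)
        = ((2:ℝ) ^ (-s)) ^ j * ((2:ℝ) ^ (-s)) ^ 3 := by
      intro j
      rw [show -(((j:ℝ)+3))*s = (-s) * (((j+3:ℕ)):ℝ) by push_cast; ring,
        Real.rpow_mul (by norm_num : (0:ℝ) ≤ 2), Real.rpow_natCast, pow_add]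
    simp_rw [heq]
    exact (summable_geometric_of_lt_one hr0 hr1).mul_right _
  have hsum : ∀ y : ℝ, Summable (fun j : ℕ =>
      (2 : ℝ) ^ (-(((j : ℝ) + 3)) * s) * Real.cos ((11 / 8) * 2 ^ (j + 3) * y)) := by
    intro y
    apply Summable.of_norm_bounded hsa
    intro j
    rw [Real.norm_eq_abs, abs_mul, abs_of_pos (ha0 j)]
    calc (2 : ℝ) ^ (-(((j : ℝ) + 3)) * s) * |Real.cos _|
        ≤ (2 : ℝ) ^ (-(((j : ℝ) + 3)) * s) * 1 :=
          mul_le_mul_of_nonneg_left (Real.abs_cos_le_one _) (ha0 j).le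
      _ = _ := mul_one _
  have h2n : (2:ℝ) ^ n ≠ 0 := by positivity
  -- pointwise finite sum
  have hkey : ∀ x : ℝ, f (x - t) - f x = ∑ j ∈ Finset.range (n-2),
      (2 : ℝ) ^ (-(((j : ℝ) + 3)) * s) *
        (Real.cos ((11/8) * 2 ^ (j+3) * (x - t)) - Real.cos ((11/8) * 2 ^ (j+3) * x)) := by
    intro x
    rw [hf, hf, ← Summable.tsum_sub (hsum (x - t)) (hsum x)]
    rw [tsum_eq_sum (s := Finset.range (n-2)) ?_]
    · exact Finset.sum_congr rfl fun j _ => (mul_sub _ _ _).symm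
    · intro j hj
      rw [Finset.mem_range, not_lt] at hj
      have hωt : (11/8 : ℝ) * 2 ^ (j+3) * t = ((2 ^ (j+2-n) : ℕ) : ℝ) * (2*π) := by
        rw [ht, show j+3 = (j+2-n)+(n+1) from by omega, pow_add]
        push_cast
        field_simp
        ring
      have harg : (11/8 : ℝ) * 2 ^ (j+3) * (x - t)
          = (11/8 : ℝ) * 2 ^ (j+3) * x - (2 ^ (j+2-n) : ℕ) * (2*π) := by
        rw [mul_sub, hωt]
      rw [harg, Real.cos_periodic.sub_nat_mul_eq, sub_self]
  have hN : 0 < 11 * 2 ^ (n-3) := by positivity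
  have hInt : ∀ j ∈ Finset.range (n-2), IntervalIntegrable (fun x : ℝ =>
      (((2:ℝ) ^ (-(((j:ℝ)+3)) * s) *
          (Real.cos ((11/8) * 2 ^ (j+3) * (x - t)) - Real.cos ((11/8) * 2 ^ (j+3) * x)) : ℝ) : ℂ)
        * Complex.exp (-Complex.I * ((11 * 2 ^ (n - 3) : ℕ) : ℂ) * (x : ℂ)))
      MeasureTheory.volume 0 (2*π) :=
    fun j _ => Continuous.intervalIntegrable (by fun_prop) _ _
  have hintg : (∫ x in (0:ℝ)..(2*π), ((f (x - t) - f x : ℝ) : ℂ)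
        * Complex.exp (-Complex.I * ((11 * 2 ^ (n - 3) : ℕ) : ℂ) * (x : ℂ)))
      = ∑ j ∈ Finset.range (n-2), ∫ x in (0:ℝ)..(2*π),
        (((2:ℝ) ^ (-(((j:ℝ)+3)) * s) *
            (Real.cos ((11/8) * 2 ^ (j+3) * (x - t)) - Real.cos ((11/8) * 2 ^ (j+3) * x)) : ℝ) : ℂ)
          * Complex.exp (-Complex.I * ((11 * 2 ^ (n - 3) : ℕ) : ℂ) * (x : ℂ)) := by
    rw [← intervalIntegral.integral_finset_sum hInt]
    apply intervalIntegral.integral_congr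
    intro x _
    simp only [hkey x]
    push_cast
    rw [Finset.sum_mul]
  have hterm : ∀ j ∈ Finset.range (n-2),
      (∫ x in (0:ℝ)..(2*π),
        (((2:ℝ) ^ (-(((j:ℝ)+3)) * s) *
            (Real.cos ((11/8) * 2 ^ (j+3) * (x - t)) - Real.cos ((11/8) * 2 ^ (j+3) * x)) : ℝ) : ℂ)
          * Complex.exp (-Complex.I * ((11 * 2 ^ (n - 3) : ℕ) : ℂ) * (x : ℂ)))
      = if j = n-3 then -(2*(π:ℂ)) * (((2:ℝ) ^ (-(((j:ℝ)+3)) * s) : ℝ) : ℂ) else 0 := by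
    intro j hj
    set m : ℕ := 11 * 2 ^ j with hm
    set φ : ℝ := -((11/8) * 2 ^ (j+3) * t) with hφ
    have hmr : ((m : ℕ) : ℝ) = (11/8) * 2 ^ (j+3) := by
      rw [hm]; push_cast; ring
    have hpt : ∀ x : ℝ,
        (((2:ℝ) ^ (-(((j:ℝ)+3)) * s) *
            (Real.cos ((11/8) * 2 ^ (j+3) * (x - t)) - Real.cos ((11/8) * 2 ^ (j+3) * x)) : ℝ) : ℂ)
          * Complex.exp (-Complex.I * ((11 * 2 ^ (n - 3) : ℕ) : ℂ) * (x : ℂ))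
        = (((2:ℝ) ^ (-(((j:ℝ)+3)) * s) : ℝ) : ℂ) *
            (((Real.cos ((m:ℝ) * x + φ) : ℝ) : ℂ)
                * Complex.exp (-Complex.I * ((11 * 2 ^ (n - 3) : ℕ) : ℂ) * (x : ℂ))
              - ((Real.cos ((m:ℝ) * x + 0) : ℝ) : ℂ)
                * Complex.exp (-Complex.I * ((11 * 2 ^ (n - 3) : ℕ) : ℂ) * (x : ℂ))) := by
      intro x
      have e1 : (11/8 : ℝ) * 2 ^ (j+3) * (x - t) = (m:ℝ) * x + φ := by
        rw [hmr, hφ]; ring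
      have e2 : (11/8 : ℝ) * 2 ^ (j+3) * x = (m:ℝ) * x + 0 := by
        rw [hmr]; ring
      rw [e1, e2]
      push_cast
      ring
    rw [intervalIntegral.integral_congr (fun x _ => hpt x),
      intervalIntegral.integral_const_mul,
      intervalIntegral.integral_sub (Continuous.intervalIntegrable (by fun_prop) _ _)
        (Continuous.intervalIntegrable (by fun_prop) _ _),
      cos_int m _ hN φ, cos_int m _ hN 0]
    have hmN : (m = 11 * 2 ^ (n-3)) ↔ j = n - 3 := by
      rw [hm]
      constructor
      · intro h
        have h2 : (2:ℕ) ^ j = 2 ^ (n-3) := by omega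
        exact Nat.pow_right_injective (le_refl 2) h2
      · intro h; rw [h]
    rcases eq_or_ne j (n-3) with hj3 | hj3
    · rw [if_pos (hmN.mpr hj3), if_pos (hmN.mpr hj3), if_pos hj3]
      have hφπ : φ = -π := by
        rw [hφ, ht, hj3, show n - 3 + 3 = n from by omega]
        field_simp
      have hexp : Complex.exp ((φ : ℂ) * Complex.I) = -1 := by
        rw [hφπ]
        push_cast
        rw [show (-(π:ℂ)) * Complex.I = -((π:ℂ) * Complex.I) from by ring,
          Complex.exp_neg, Complex.exp_pi_mul_I]
        norm_num
      rw [hexp, show ((0:ℝ):ℂ) * Complex.I = 0 from by norm_num, Complex.exp_zero]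
      ring
    · rw [if_neg (fun h => hj3 (hmN.mp h)), if_neg (fun h => hj3 (hmN.mp h)), if_neg hj3,
        sub_self, mul_zero]
  rw [hintg, Finset.sum_congr rfl hterm, Finset.sum_ite_eq' (Finset.range (n-2)) (n-3)]
  rw [if_pos (Finset.mem_range.mpr (by omega))]
  have hπ : (π : ℂ) ≠ 0 := by
    exact_mod_cast Complex.ofReal_ne_zero.mpr Real.pi_ne_zero
  have hco : (2:ℝ) ^ (-((((n-3:ℕ):ℝ))+3) * s) = (2:ℝ) ^ (-(n:ℝ) * s) := by
    rw [show -((((n-3:ℕ):ℝ))+3) * s = -(n:ℝ) * s from by push_cast [Nat.cast_sub hn]; ring]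
  rw [hco]
  field_simp
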